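/- Let k ∈ ℝ and let f : S² → ℂ be a continuous function on the unit sphere. Then the function u : ℝ³ → ℂ defined by u(r) = ∫_{S²} f(q) e^{i k ⟪q, r⟫} dσ(q) is real-analytic on all of ℝ³. Consequently, if u vanishes on a nonempty open subset of ℝ³, then u vanishes identically on ℝ³. -/

import Mathlib

open MeasureTheory Metric Real
open scoped RealInnerProductSpace ENNReal NNReal

set_option maxHeartbeats 1000000

noncomputable section HerglotzAux


/-- Trigonometric parametrization of the unit sphere in `ℝ³`. -/
def sphParam (p : ℝ × ℝ) : EuclideanSpace ℝ (Fin 3) :=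
  (EuclideanSpace.equiv (Fin 3) ℝ).symm
    ![Real.cos p.1 * Real.cos p.2, Real.cos p.1 * Real.sin p.2, Real.sin p.1]

lemma sphParam_apply (p : ℝ × ℝ) (i : Fin 3) :
    sphParam p i = ![Real.cos p.1 * Real.cos p.2, Real.cos p.1 * Real.sin p.2, Real.sin p.1] i :=
  rfl

lemma lipschitzWith_sin : LipschitzWith 1 Real.sin := by
  apply lipschitzWith_of_nnnorm_deriv_le Real.differentiable_sin
  intro x
  rw [Real.deriv_sin]
  exact NNReal.coe_le_coe.mp (by simpa [Real.norm_eq_abs] using Real.abs_cos_le_one x)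

lemma lipschitzWith_cos : LipschitzWith 1 Real.cos := by
  apply lipschitzWith_of_nnnorm_deriv_le Real.differentiable_cos
  intro x
  rw [Real.deriv_cos]
  exact NNReal.coe_le_coe.mp (by simpa [Real.norm_eq_abs] using Real.abs_sin_le_one x)

lemma lipschitz_sphParam : LipschitzWith 4 sphParam := by
  apply LipschitzWith.of_dist_le_mul
  intro p q
  have h1 : |Real.cos p.1 - Real.cos q.1| ≤ dist p q := by
    have := _root_.lipschitzWith_cos.dist_le_mul p.1 q.1
    simp only [NNReal.coe_one, one_mul, Real.dist_eq] at this
    exact this.trans (by rw [Prod.dist_eq]; exact le_max_left _ _)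
  have h1' : |Real.cos p.2 - Real.cos q.2| ≤ dist p q := by
    have := _root_.lipschitzWith_cos.dist_le_mul p.2 q.2
    simp only [NNReal.coe_one, one_mul, Real.dist_eq] at this
    exact this.trans (by rw [Prod.dist_eq]; exact le_max_right _ _)
  have h2 : |Real.sin p.1 - Real.sin q.1| ≤ dist p q := by
    have := _root_.lipschitzWith_sin.dist_le_mul p.1 q.1
    simp only [NNReal.coe_one, one_mul, Real.dist_eq] at this
    exact this.trans (by rw [Prod.dist_eq]; exact le_max_left _ _)
  have h2' : |Real.sin p.2 - Real.sin q.2| ≤ dist p q := by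
    have := _root_.lipschitzWith_sin.dist_le_mul p.2 q.2
    simp only [NNReal.coe_one, one_mul, Real.dist_eq] at this
    exact this.trans (by rw [Prod.dist_eq]; exact le_max_right _ _)
  have hd : (0:ℝ) ≤ dist p q := dist_nonneg
  have e0 : |sphParam p 0 - sphParam q 0| ≤ 2 * dist p q := by
    simp only [sphParam_apply, Matrix.cons_val_zero]
    have : Real.cos p.1 * Real.cos p.2 - Real.cos q.1 * Real.cos q.2
        = (Real.cos p.1 - Real.cos q.1) * Real.cos p.2
          + Real.cos q.1 * (Real.cos p.2 - Real.cos q.2) := by ring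
    rw [this]
    calc _ ≤ |(Real.cos p.1 - Real.cos q.1) * Real.cos p.2|
          + |Real.cos q.1 * (Real.cos p.2 - Real.cos q.2)| := abs_add_le _ _
      _ ≤ |Real.cos p.1 - Real.cos q.1| * 1 + 1 * |Real.cos p.2 - Real.cos q.2| := by
          rw [abs_mul, abs_mul]
          gcongr
          · exact Real.abs_cos_le_one _
          · exact Real.abs_cos_le_one _
      _ ≤ 2 * dist p q := by linarith
  have e1 : |sphParam p 1 - sphParam q 1| ≤ 2 * dist p q := by
    simp only [sphParam_apply, Matrix.cons_val_one, Matrix.head_cons, Matrix.cons_val_zero]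
    have : Real.cos p.1 * Real.sin p.2 - Real.cos q.1 * Real.sin q.2
        = (Real.cos p.1 - Real.cos q.1) * Real.sin p.2
          + Real.cos q.1 * (Real.sin p.2 - Real.sin q.2) := by ring
    rw [this]
    calc _ ≤ |(Real.cos p.1 - Real.cos q.1) * Real.sin p.2|
          + |Real.cos q.1 * (Real.sin p.2 - Real.sin q.2)| := abs_add_le _ _
      _ ≤ |Real.cos p.1 - Real.cos q.1| * 1 + 1 * |Real.sin p.2 - Real.sin q.2| := by
          rw [abs_mul, abs_mul]
          gcongr
          · exact Real.abs_sin_le_one _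
          · exact Real.abs_cos_le_one _
      _ ≤ 2 * dist p q := by linarith
  have e2 : |sphParam p 2 - sphParam q 2| ≤ 2 * dist p q := by
    simp only [sphParam_apply, Matrix.cons_val_two, Matrix.tail_cons, Matrix.head_cons]
    exact h2.trans (by linarith)
  rw [EuclideanSpace.dist_eq]
  have : ∑ i : Fin 3, dist (sphParam p i) (sphParam q i) ^ 2 ≤ (4 * dist p q) ^ 2 := by
    rw [Fin.sum_univ_three]
    simp only [Real.dist_eq]
    nlinarith [abs_nonneg (sphParam p 0 - sphParam q 0), abs_nonneg (sphParam p 1 - sphParam q 1),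
      abs_nonneg (sphParam p 2 - sphParam q 2), sq_abs (sphParam p 0 - sphParam q 0),
      sq_abs (sphParam p 1 - sphParam q 1), sq_abs (sphParam p 2 - sphParam q 2)]
  calc Real.sqrt (∑ i : Fin 3, dist (sphParam p i) (sphParam q i) ^ 2)
      ≤ Real.sqrt ((4 * dist p q) ^ 2) := Real.sqrt_le_sqrt this
    _ = 4 * dist p q := Real.sqrt_sq (by positivity)
    _ = (4:ℝ≥0) * dist p q := by norm_num

lemma sphere_subset_image :
    Metric.sphere (0 : EuclideanSpace ℝ (Fin 3)) 1 ⊆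
      sphParam '' (Set.Icc ((-4 : ℝ), (-4 : ℝ)) (4, 4)) := by
  intro q hq
  have hnorm : ‖q‖ = 1 := by simpa using hq
  have hsum : (q 0) ^ 2 + (q 1) ^ 2 + (q 2) ^ 2 = 1 := by
    have := EuclideanSpace.norm_eq q
    rw [hnorm] at this
    have h := congrArg (· ^ 2) this.symm
    simp only [Fin.sum_univ_three] at h
    rw [Real.sq_sqrt (by positivity)] at h
    simpa [sq_abs] using h
  have h2a : -1 ≤ q 2 := by nlinarith [sq_nonneg (q 0), sq_nonneg (q 1), sq_nonneg (q 2 + 1)]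
  have h2b : q 2 ≤ 1 := by nlinarith [sq_nonneg (q 0), sq_nonneg (q 1), sq_nonneg (q 2 - 1)]
  set a := Real.arcsin (q 2) with ha_def
  have ha_sin : Real.sin a = q 2 := Real.sin_arcsin h2a h2b
  have ha_cos : Real.cos a = Real.sqrt (1 - (q 2) ^ 2) := Real.cos_arcsin _
  have hcos_sq : Real.cos a ^ 2 = (q 0) ^ 2 + (q 1) ^ 2 := by
    rw [ha_cos, Real.sq_sqrt (by nlinarith)]
    linarith
  have hpi : Real.pi ≤ 4 := Real.pi_le_four
  have harc := Real.arcsin_mem_Icc (q 2)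
  have ha_mem : a ∈ Set.Icc (-4 : ℝ) 4 := by
    constructor <;> [linarith [harc.1]; linarith [harc.2]]
  by_cases h01 : q 0 = 0 ∧ q 1 = 0
  · refine ⟨(a, 0), ?_, ?_⟩
    · exact ⟨⟨ha_mem.1, by norm_num⟩, ⟨ha_mem.2, by norm_num⟩⟩
    · have hc0 : Real.cos a = 0 := by
        have : Real.cos a ^ 2 = 0 := by rw [hcos_sq, h01.1, h01.2]; ring
        exact pow_eq_zero_iff (by norm_num) |>.mp this
      apply PiLp.ext
      intro i
      fin_cases i
      · show sphParam (a, 0) 0 = q 0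
        rw [sphParam_apply]
        simp only [Matrix.cons_val_zero, hc0, zero_mul]
        exact h01.1.symm
      · show sphParam (a, 0) 1 = q 1
        rw [sphParam_apply]
        simp only [Matrix.cons_val_one, Matrix.head_cons, hc0, zero_mul]
        exact h01.2.symm
      · show sphParam (a, 0) 2 = q 2
        rw [sphParam_apply]
        simpa using ha_sin
  · set z : ℂ := ⟨q 0, q 1⟩ with hz_def
    have hz : z ≠ 0 := by
      intro h
      apply h01
      have h1 : z.re = 0 := by rw [h]; simp
      have h2 : z.im = 0 := by rw [h]; simp
      exact ⟨h1, h2⟩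
    have habs : ‖z‖ = Real.cos a := by
      rw [ha_cos]
      rw [Complex.norm_def, Complex.normSq_mk]
      congr 1
      nlinarith
    have habs_ne : ‖z‖ ≠ 0 := by simpa using hz
    set b := Complex.arg z with hb_def
    have hb_mem : b ∈ Set.Icc (-4 : ℝ) 4 := by
      have h1 := Complex.neg_pi_lt_arg z
      have h2 := Complex.arg_le_pi z
      constructor <;> [linarith; linarith]
    refine ⟨(a, b), ⟨⟨ha_mem.1, hb_mem.1⟩, ⟨ha_mem.2, hb_mem.2⟩⟩, ?_⟩
    have hcb : Real.cos b = q 0 / ‖z‖ := by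
      rw [hb_def, Complex.cos_arg hz]
    have hsb : Real.sin b = q 1 / ‖z‖ := by
      rw [hb_def, Complex.sin_arg]
    apply PiLp.ext
    intro i
    fin_cases i
    · show sphParam (a, b) 0 = q 0
      rw [sphParam_apply]
      simp only [Matrix.cons_val_zero]
      rw [hcb, ← habs]
      field_simp
    · show sphParam (a, b) 1 = q 1
      rw [sphParam_apply]
      simp only [Matrix.cons_val_one, Matrix.head_cons, Matrix.cons_val_zero]
      rw [hsb, ← habs]
      field_simp
    · show sphParam (a, b) 2 = q 2
      rw [sphParam_apply]
      simpa using ha_sin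

lemma sphere_hausdorff_lt_top :
    μH[2] (Metric.sphere (0 : EuclideanSpace ℝ (Fin 3)) 1) < ⊤ := by
  have h1 : μH[2] (Metric.sphere (0 : EuclideanSpace ℝ (Fin 3)) 1)
      ≤ μH[2] (sphParam '' (Set.Icc ((-4 : ℝ), (-4 : ℝ)) (4, 4))) :=
    measure_mono sphere_subset_image
  have h2 := lipschitz_sphParam.hausdorffMeasure_image_le (by norm_num : (0:ℝ) ≤ 2)
    (Set.Icc ((-4 : ℝ), (-4 : ℝ)) (4, 4))
  have h3 : (μH[2] : Measure (ℝ × ℝ)) (Set.Icc ((-4 : ℝ), (-4 : ℝ)) (4, 4)) < ⊤ := by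
    rw [MeasureTheory.hausdorffMeasure_prod_real]
    exact isCompact_Icc.measure_lt_top
  calc μH[2] (Metric.sphere (0 : EuclideanSpace ℝ (Fin 3)) 1)
      ≤ (4 : ℝ≥0) ^ (2:ℝ) * (μH[2] : Measure (ℝ × ℝ)) (Set.Icc ((-4 : ℝ), (-4 : ℝ)) (4, 4)) :=
        h1.trans h2
    _ < ⊤ := ENNReal.mul_lt_top
        (ENNReal.rpow_lt_top_of_nonneg (by norm_num) ENNReal.coe_ne_top) h3

/-- The `n`-linear map `(h₁, …, hₙ) ↦ ∏ᵢ ⟪q, hᵢ⟫` with values in `ℂ`. -/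
def sphCoefML (n : ℕ) (q : EuclideanSpace ℝ (Fin 3)) :
    ContinuousMultilinearMap ℝ (fun _ : Fin n => EuclideanSpace ℝ (Fin 3)) ℂ :=
  (ContinuousMultilinearMap.mkPiAlgebra ℝ (Fin n) ℂ).compContinuousLinearMap
    (fun _ => Complex.ofRealCLM.comp (innerSL ℝ q))

lemma sphCoefML_apply_const (n : ℕ) (q h : EuclideanSpace ℝ (Fin 3)) :
    sphCoefML n q (fun _ => h) = ((⟪q, h⟫ : ℝ) : ℂ) ^ n := by
  simp [sphCoefML, Finset.prod_const]

lemma norm_inner_clm_le (q : EuclideanSpace ℝ (Fin 3)) :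
    ‖Complex.ofRealCLM.comp (innerSL ℝ q)‖ ≤ ‖q‖ := by
  apply ContinuousLinearMap.opNorm_le_bound _ (norm_nonneg q)
  intro x
  simp only [ContinuousLinearMap.coe_comp', Function.comp_apply, Complex.ofRealCLM_apply,
    Complex.norm_real, innerSL_apply_apply]
  exact abs_real_inner_le_norm q x

lemma norm_sphCoefML_le (n : ℕ) (q : EuclideanSpace ℝ (Fin 3)) :
    ‖sphCoefML n q‖ ≤ ‖q‖ ^ n := by
  refine le_trans (ContinuousMultilinearMap.norm_compContinuousLinearMap_le _ _) ?_
  rw [ContinuousMultilinearMap.norm_mkPiAlgebra, one_mul]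
  calc (∏ _i : Fin n, ‖Complex.ofRealCLM.comp (innerSL ℝ q)‖)
      ≤ ∏ _i : Fin n, ‖q‖ :=
        Finset.prod_le_prod (fun i _ => norm_nonneg _) (fun i _ => norm_inner_clm_le q)
    _ = ‖q‖ ^ n := by simp

lemma continuous_sphCoefML (n : ℕ) : Continuous (sphCoefML n) := by
  have h1 : Continuous fun q : EuclideanSpace ℝ (Fin 3) =>
      (fun _ : Fin n => Complex.ofRealCLM.comp (innerSL ℝ q)) :=
    continuous_pi fun _ =>
      ((ContinuousLinearMap.compL ℝ (EuclideanSpace ℝ (Fin 3)) ℝ ℂ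
        Complex.ofRealCLM).continuous).comp (innerSL ℝ).continuous
  have h2 : Continuous fun (fs : Fin n → (EuclideanSpace ℝ (Fin 3) →L[ℝ] ℂ)) =>
      (ContinuousMultilinearMap.compContinuousLinearMapContinuousMultilinear ℝ
        (fun _ : Fin n => EuclideanSpace ℝ (Fin 3)) (fun _ : Fin n => ℂ) ℂ fs)
        (ContinuousMultilinearMap.mkPiAlgebra ℝ (Fin n) ℂ) := by
    exact (ContinuousLinearMap.apply ℝ
      (ContinuousMultilinearMap ℝ (fun _ : Fin n => EuclideanSpace ℝ (Fin 3)) ℂ)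
      (ContinuousMultilinearMap.mkPiAlgebra ℝ (Fin n) ℂ)).continuous.comp
      (ContinuousMultilinearMap.compContinuousLinearMapContinuousMultilinear ℝ _ _ ℂ).cont
  exact h2.comp h1

lemma herglotz_analyticAt (k : ℝ) (f : EuclideanSpace ℝ (Fin 3) → ℂ)
    (hf : ContinuousOn f (Metric.sphere (0 : EuclideanSpace ℝ (Fin 3)) 1))
    (r₀ : EuclideanSpace ℝ (Fin 3)) :
    AnalyticAt ℝ (fun r => ∫ q in Metric.sphere (0 : EuclideanSpace ℝ (Fin 3)) 1,
      f q * Complex.exp (Complex.I * (k : ℂ) * (⟪q, r⟫ : ℝ)) ∂(μH[2])) r₀ := by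
  set S : Set (EuclideanSpace ℝ (Fin 3)) := Metric.sphere 0 1 with hS_def
  have hSm : MeasurableSet S := (Metric.isClosed_sphere).measurableSet
  haveI : IsFiniteMeasure ((μH[2] : Measure (EuclideanSpace ℝ (Fin 3))).restrict S) :=
    ⟨by rw [Measure.restrict_apply_univ]; exact sphere_hausdorff_lt_top⟩
  obtain ⟨C₀, hC₀⟩ : ∃ C₀, ∀ q ∈ S, ‖f q‖ ≤ C₀ :=
    (isCompact_sphere (0 : EuclideanSpace ℝ (Fin 3)) 1).exists_bound_of_continuousOn hf
  set C : ℝ := max C₀ 0 with hC_def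
  have hC : ∀ q ∈ S, ‖f q‖ ≤ C := fun q hq => (hC₀ q hq).trans (le_max_left _ _)
  have hC0 : 0 ≤ C := le_max_right _ _
  set g : EuclideanSpace ℝ (Fin 3) → ℂ :=
    fun q => f q * Complex.exp (Complex.I * (k : ℂ) * (⟪q, r₀⟫ : ℝ)) with hg_def
  have hexp_norm : ∀ (q r : EuclideanSpace ℝ (Fin 3)),
      ‖Complex.exp (Complex.I * (k : ℂ) * ((⟪q, r⟫ : ℝ) : ℂ))‖ = 1 := by
    intro q r
    rw [Complex.norm_exp]
    simp [Complex.mul_re]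
  have hg_cont : ContinuousOn g S := by
    apply hf.mul
    apply Continuous.continuousOn
    exact Complex.continuous_exp.comp
      (continuous_const.mul (Complex.continuous_ofReal.comp (continuous_id.inner continuous_const)))
  have hg_norm : ∀ q ∈ S, ‖g q‖ ≤ C := by
    intro q hq
    rw [hg_def]
    simp only [norm_mul, hexp_norm q r₀, mul_one]
    exact hC q hq
  have hq_norm : ∀ q ∈ S, ‖q‖ = 1 := fun q hq => by
    simpa using mem_sphere_zero_iff_norm.mp hq
  -- the power series
  set p : FormalMultilinearSeries ℝ (EuclideanSpace ℝ (Fin 3)) ℂ := fun n =>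
    ((Complex.I * (k : ℂ)) ^ n * ((n.factorial : ℂ))⁻¹) •
      ∫ q in S, g q • sphCoefML n q ∂(μH[2]) with hp_def
  -- integrability
  have hInt : ∀ n : ℕ, Integrable (fun q => g q • sphCoefML n q)
      ((μH[2] : Measure (EuclideanSpace ℝ (Fin 3))).restrict S) := by
    intro n
    haveI : SecondCountableTopologyEither (EuclideanSpace ℝ (Fin 3))
        (ContinuousMultilinearMap ℝ (fun _ : Fin n => EuclideanSpace ℝ (Fin 3)) ℂ) :=
      secondCountableTopologyEither_of_left _ _
    refine Integrable.mono' (integrable_const C) ?_ ?_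
    · exact (hg_cont.smul (continuous_sphCoefML n).continuousOn).aestronglyMeasurable hSm
    · rw [ae_restrict_iff' hSm]
      apply ae_of_all
      intro q hq
      show ‖g q • sphCoefML n q‖ ≤ C
      rw [norm_smul (g q) (sphCoefML n q)]
      calc ‖g q‖ * ‖sphCoefML n q‖ ≤ C * 1 := by
            apply mul_le_mul (hg_norm q hq) ?_ (norm_nonneg _) hC0
            have := norm_sphCoefML_le n q
            rwa [hq_norm q hq, one_pow] at this
        _ = C := mul_one C
  -- applying the series coefficients to constant vectors
  have happly : ∀ (n : ℕ) (y : EuclideanSpace ℝ (Fin 3)),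
      (p n fun _ => y) = ∫ q in S,
        ((Complex.I * (k : ℂ)) ^ n * ((n.factorial : ℂ))⁻¹ * g q) * ((⟪q, y⟫ : ℝ) : ℂ) ^ n
          ∂(μH[2]) := by
    intro n y
    rw [hp_def]
    simp only [ContinuousMultilinearMap.smul_apply]
    rw [ContinuousMultilinearMap.integral_apply (hInt n)]
    rw [← integral_smul]
    congr 1
    funext q
    simp only [ContinuousMultilinearMap.smul_apply, sphCoefML_apply_const, smul_eq_mul]
    ring
  -- norm of the scalar factor
  have hscal : ∀ n : ℕ, ‖(Complex.I * (k : ℂ)) ^ n * ((n.factorial : ℂ))⁻¹‖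
      = |k| ^ n / n.factorial := by
    intro n
    rw [norm_mul, norm_pow, norm_mul, Complex.norm_I, one_mul, Complex.norm_real,
      norm_inv, Complex.norm_natCast, Real.norm_eq_abs, div_eq_mul_inv]
  -- pointwise bound for the coefficient integrand
  have hbound : ∀ (n : ℕ) (q : EuclideanSpace ℝ (Fin 3)), q ∈ S →
      ‖g q • sphCoefML n q‖ ≤ C := by
    intro n q hq
    rw [norm_smul (g q) (sphCoefML n q)]
    calc ‖g q‖ * ‖sphCoefML n q‖ ≤ C * 1 := by
          apply mul_le_mul (hg_norm q hq) ?_ (norm_nonneg _) hC0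
          have := norm_sphCoefML_le n q
          rwa [hq_norm q hq, one_pow] at this
      _ = C := mul_one C
  -- norm bound on the coefficients
  set A : ℝ := C * (μH[2] S).toReal with hA_def
  have hnormp : ∀ n : ℕ, ‖p n‖ ≤ A * (|k| ^ n / n.factorial) := by
    intro n
    rw [hp_def]
    rw [norm_smul ((Complex.I * (k : ℂ)) ^ n * ((n.factorial : ℂ))⁻¹)
      (∫ q in S, g q • sphCoefML n q ∂(μH[2]))]
    calc ‖(Complex.I * (k : ℂ)) ^ n * ((n.factorial : ℂ))⁻¹‖ *
          ‖∫ q in S, g q • sphCoefML n q ∂(μH[2])‖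
        ≤ (|k| ^ n / n.factorial) * (C * (μH[2] S).toReal) := by
          apply mul_le_mul (le_of_eq (hscal n)) ?_ (norm_nonneg _) (by positivity)
          exact norm_setIntegral_le_of_norm_le_const sphere_hausdorff_lt_top
            (hbound n)
      _ = A * (|k| ^ n / n.factorial) := by rw [hA_def]; ring
  -- infinite radius of convergence
  have hradius : p.radius = ⊤ := by
    apply FormalMultilinearSeries.radius_eq_top_of_summable_norm
    intro r
    apply Summable.of_nonneg_of_le
      (fun n => mul_nonneg (norm_nonneg _) (pow_nonneg r.coe_nonneg n)) ?_
      ((Real.summable_pow_div_factorial (|k| * r)).mul_left A)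
    intro n
    calc ‖p n‖ * (r : ℝ) ^ n
        ≤ (A * (|k| ^ n / n.factorial)) * (r : ℝ) ^ n :=
          mul_le_mul_of_nonneg_right (hnormp n) (pow_nonneg r.coe_nonneg n)
      _ = A * ((|k| * r) ^ n / n.factorial) := by rw [mul_pow]; ring
  -- the sum of the series
  have hhsum : ∀ y : EuclideanSpace ℝ (Fin 3),
      HasSum (fun n => p n fun _ => y)
        (∫ q in S, f q * Complex.exp (Complex.I * (k : ℂ) * ((⟪q, r₀ + y⟫ : ℝ) : ℂ))
          ∂(μH[2])) := by
    intro y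
    set F : ℕ → EuclideanSpace ℝ (Fin 3) → ℂ := fun n q =>
      ((Complex.I * (k : ℂ)) ^ n * ((n.factorial : ℂ))⁻¹ * g q) * ((⟪q, y⟫ : ℝ) : ℂ) ^ n
      with hF_def
    have hFnorm : ∀ (n : ℕ) (q : EuclideanSpace ℝ (Fin 3)), q ∈ S →
        ‖F n q‖ ≤ C * ((|k| * ‖y‖) ^ n / n.factorial) := by
      intro n q hq
      rw [hF_def]
      simp only [norm_mul, norm_pow, Complex.norm_I, one_mul, Complex.norm_real,
        norm_inv, Complex.norm_natCast, Real.norm_eq_abs]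
      have h1 : |(⟪q, y⟫ : ℝ)| ≤ ‖y‖ := by
        have := abs_real_inner_le_norm q y
        rwa [hq_norm q hq, one_mul] at this
      have h2 : ‖g q‖ ≤ C := hg_norm q hq
      calc |k| ^ n * ((n.factorial : ℝ))⁻¹ * ‖g q‖ * |(⟪q, y⟫ : ℝ)| ^ n
          ≤ |k| ^ n * ((n.factorial : ℝ))⁻¹ * C * ‖y‖ ^ n := by gcongr
        _ = C * ((|k| * ‖y‖) ^ n / n.factorial) := by rw [mul_pow]; ring
    have hFint : ∀ n : ℕ, Integrable (F n)
        ((μH[2] : Measure (EuclideanSpace ℝ (Fin 3))).restrict S) := by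
      intro n
      refine Integrable.mono' (integrable_const (C * ((|k| * ‖y‖) ^ n / n.factorial))) ?_ ?_
      · apply ContinuousOn.aestronglyMeasurable ?_ hSm
        apply ContinuousOn.mul
        · exact (continuousOn_const.mul hg_cont)
        · apply Continuous.continuousOn
          exact (Complex.continuous_ofReal.comp (continuous_id.inner continuous_const)).pow n
      · exact ae_restrict_of_forall_mem hSm fun q hq => hFnorm n q hq
    have hFsum : Summable (fun n => ∫ q, ‖F n q‖
        ∂((μH[2] : Measure (EuclideanSpace ℝ (Fin 3))).restrict S)) := by
      apply Summable.of_nonneg_of_le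
        (fun n => integral_nonneg fun q => norm_nonneg _) ?_
        ((Real.summable_pow_div_factorial (|k| * ‖y‖)).mul_left A)
      intro n
      calc ∫ q, ‖F n q‖ ∂((μH[2] : Measure (EuclideanSpace ℝ (Fin 3))).restrict S)
          ≤ ∫ _q, (C * ((|k| * ‖y‖) ^ n / n.factorial))
              ∂((μH[2] : Measure (EuclideanSpace ℝ (Fin 3))).restrict S) := by
            apply integral_mono_ae (hFint n).norm (integrable_const _)
            exact ae_restrict_of_forall_mem hSm fun q hq => hFnorm n q hq
        _ = A * ((|k| * ‖y‖) ^ n / n.factorial) := by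
            rw [integral_const, measureReal_restrict_apply_univ, measureReal_def, smul_eq_mul, hA_def]; ring
    have H := hasSum_integral_of_summable_integral_norm hFint hFsum
    have h1 : (fun n => ∫ q, F n q
        ∂((μH[2] : Measure (EuclideanSpace ℝ (Fin 3))).restrict S))
        = fun n => p n fun _ => y := funext fun n => (happly n y).symm
    have h2 : ∫ q, (∑' n, F n q) ∂((μH[2] : Measure (EuclideanSpace ℝ (Fin 3))).restrict S)
        = ∫ q in S, f q * Complex.exp (Complex.I * (k : ℂ) * ((⟪q, r₀ + y⟫ : ℝ) : ℂ))
          ∂(μH[2]) := by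
      apply setIntegral_congr_fun hSm
      intro q hq
      have h3 : ∀ n : ℕ, F n q
          = g q * ((Complex.I * (k : ℂ) * ((⟪q, y⟫ : ℝ) : ℂ)) ^ n * ((n.factorial : ℂ))⁻¹) := by
        intro n
        rw [hF_def]
        simp only [mul_pow]
        ring
      calc (∑' n, F n q)
          = ∑' n, g q * ((Complex.I * (k : ℂ) * ((⟪q, y⟫ : ℝ) : ℂ)) ^ n
              * ((n.factorial : ℂ))⁻¹) := tsum_congr h3
        _ = g q * ∑' n, ((Complex.I * (k : ℂ) * ((⟪q, y⟫ : ℝ) : ℂ)) ^ n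
              * ((n.factorial : ℂ))⁻¹) := tsum_mul_left
        _ = g q * Complex.exp (Complex.I * (k : ℂ) * ((⟪q, y⟫ : ℝ) : ℂ)) := by
            rw [Complex.exp_eq_exp_ℂ, NormedSpace.exp_eq_tsum (𝕂 := ℂ)]
            exact congrArg (g q * ·) (tsum_congr fun n => by rw [smul_eq_mul, mul_comm])
        _ = f q * Complex.exp (Complex.I * (k : ℂ) * ((⟪q, r₀ + y⟫ : ℝ) : ℂ)) := by
            have h4 : (⟪q, r₀ + y⟫ : ℝ) = (⟪q, r₀⟫ : ℝ) + (⟪q, y⟫ : ℝ) := inner_add_right q r₀ y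
            rw [h4, Complex.ofReal_add, mul_add, Complex.exp_add, hg_def]
            ring
    rw [h1, h2] at H
    exact H
  have hball : HasFPowerSeriesOnBall
      (fun r => ∫ q in S, f q * Complex.exp (Complex.I * (k : ℂ) * ((⟪q, r⟫ : ℝ) : ℂ))
        ∂(μH[2])) p r₀ ⊤ :=
    { r_le := by rw [hradius]
      r_pos := ENNReal.zero_lt_top
      hasSum := fun {y} _ => hhsum y }
  exact hball.analyticAt

end HerglotzAux

/-- The superposition of plane waves with directions on the unit sphere `S² ⊆ ℝ³`,
`u(r) = ∫_{S²} f(q) e^{i k ⟪q,r⟫} dσ(q)` (with `σ` the surface measure, i.e. the two-dimensional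
Hausdorff measure on the sphere), is real-analytic on all of `ℝ³`; consequently, if it vanishes
on a nonempty open set then it vanishes identically. -/
theorem herglotz_wave_analytic
    (k : ℝ) (f : EuclideanSpace ℝ (Fin 3) → ℂ)
    (hf : ContinuousOn f (Metric.sphere (0 : EuclideanSpace ℝ (Fin 3)) 1))
    (u : EuclideanSpace ℝ (Fin 3) → ℂ)
    (hu : ∀ r : EuclideanSpace ℝ (Fin 3),
      u r = ∫ q in Metric.sphere (0 : EuclideanSpace ℝ (Fin 3)) 1,
        f q * Complex.exp (Complex.I * (k : ℂ) * (⟪q, r⟫ : ℝ)) ∂(μH[2])) :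
    AnalyticOnNhd ℝ u Set.univ ∧
      ∀ U : Set (EuclideanSpace ℝ (Fin 3)), IsOpen U → U.Nonempty →
        (∀ r ∈ U, u r = 0) → ∀ r : EuclideanSpace ℝ (Fin 3), u r = 0 := by
  have hu' : u = fun r => ∫ q in Metric.sphere (0 : EuclideanSpace ℝ (Fin 3)) 1,
      f q * Complex.exp (Complex.I * (k : ℂ) * (⟪q, r⟫ : ℝ)) ∂(μH[2]) := funext hu
  have hA : AnalyticOnNhd ℝ u Set.univ := by
    intro r _
    rw [hu']
    exact herglotz_analyticAt k f hf r
  refine ⟨hA, ?_⟩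
  rintro U hU ⟨x₀, hx₀⟩ hvan r
  have hz : u =ᶠ[nhds x₀] 0 := Filter.eventually_of_mem (hU.mem_nhds hx₀) hvan
  have hEq := hA.eqOn_zero_of_preconnected_of_eventuallyEq_zero isPreconnected_univ
    (Set.mem_univ x₀) hz
  exact hEq (Set.mem_univ r)
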